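/- (Universal exponential stabilization by state feedback with a constant metric.) Let f : ℝⁿ → ℝⁿ be continuously differentiable with Jacobian A(x) = ∂f/∂x(x), B an n×m real matrix, W a symmetric positive definite n×n real matrix, λ > 0 and ρ ≥ 0 real numbers, and suppose W·A(x)ᵀ + A(x)·W - ρ·B·Bᵀ ⪯ -2λW for all x ∈ ℝⁿ. Define K = -(ρ/2)·Bᵀ·W⁻¹. Then for every continuous u⋆ : [0,∞) → ℝᵐ, every solution x⋆ of ẋ⋆ = f(x⋆) + B·u⋆(t) on [0,∞), and every solution x of the closed-loop system ẋ = f(x) + B·(u⋆(t) + K·(x - x⋆(t))) on [0,∞), one has (x(t)-x⋆(t))ᵀ·W⁻¹·(x(t)-x⋆(t)) ≤ e^{-2λt}·(x(0)-x⋆(0))ᵀ·W⁻¹·(x(0)-x⋆(0)) for all t ≥ 0; in particular every feasible target trajectory is globally exponentially stabilized with rate λ. -/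

import Mathlib

open Matrix

private lemma hasDerivAt_dotProduct' {n : ℕ} {u v : ℝ → Fin n → ℝ} {u' v' : Fin n → ℝ} {t : ℝ}
    (hu : HasDerivAt u u' t) (hv : HasDerivAt v v' t) :
    HasDerivAt (fun s => u s ⬝ᵥ v s) (u' ⬝ᵥ v t + u t ⬝ᵥ v') t := by
  simp only [dotProduct, ← Finset.sum_add_distrib]
  exact HasDerivAt.fun_sum fun i _ => ((hasDerivAt_pi.1 hu i).mul (hasDerivAt_pi.1 hv i))

/-- Universal exponential stabilization by state feedback with a constant metric: if
`WA(x)ᵀ + A(x)W - ρBBᵀ ⪯ -2λW` for all `x`, then with `K = -(ρ/2)BᵀW⁻¹` every feasible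
target trajectory is globally exponentially stabilized with rate `λ`, measured in the
metric `M = W⁻¹`. -/
theorem universal_stabilization_constant_metric {n m : ℕ}
    (f : (Fin n → ℝ) → (Fin n → ℝ))
    (A : (Fin n → ℝ) → Matrix (Fin n) (Fin n) ℝ)
    (hf : ∀ x : Fin n → ℝ,
      HasFDerivAt f ((Matrix.toLin' (A x)).toContinuousLinearMap) x)
    (hA : Continuous A)
    (B : Matrix (Fin n) (Fin m) ℝ)
    (W : Matrix (Fin n) (Fin n) ℝ) (hW : W.PosDef)
    (lam ρ : ℝ) (hlam : 0 < lam) (hρ : 0 ≤ ρ)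
    (hLMI : ∀ x : Fin n → ℝ,
      ((-(2 * lam)) • W - (W * (A x)ᵀ + A x * W - ρ • (B * Bᵀ))).PosSemidef)
    (K : Matrix (Fin m) (Fin n) ℝ) (hK : K = (-(ρ / 2)) • (Bᵀ * W⁻¹))
    (ustar : ℝ → (Fin m → ℝ)) (hustar : Continuous ustar)
    (xstar x : ℝ → (Fin n → ℝ))
    (hxstar : ∀ t : ℝ, 0 ≤ t →
      HasDerivAt xstar (f (xstar t) + B.mulVec (ustar t)) t)
    (hx : ∀ t : ℝ, 0 ≤ t →
      HasDerivAt x (f (x t) + B.mulVec (ustar t + K.mulVec (x t - xstar t))) t) :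
    ∀ t : ℝ, 0 ≤ t →
      (x t - xstar t) ⬝ᵥ W⁻¹.mulVec (x t - xstar t) ≤
        Real.exp (-(2 * lam) * t) * ((x 0 - xstar 0) ⬝ᵥ W⁻¹.mulVec (x 0 - xstar 0)) := by
  set M := W⁻¹ with hM
  have hdet : IsUnit W.det := isUnit_iff_ne_zero.2 hW.det_pos.ne'
  have hWM : W * M = 1 := Matrix.mul_nonsing_inv W hdet
  have hWsym : Wᵀ = W := hW.isHermitian
  have hMsym : Mᵀ = M := by rw [hM, Matrix.transpose_nonsing_inv, hWsym]
  -- symmetric dot identities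
  have symW : ∀ u w : Fin n → ℝ, u ⬝ᵥ W.mulVec w = W.mulVec u ⬝ᵥ w := by
    intro u w
    conv_lhs => rw [dotProduct_mulVec, ← hWsym, vecMul_transpose]
  have symM : ∀ u w : Fin n → ℝ, u ⬝ᵥ M.mulVec w = M.mulVec u ⬝ᵥ w := by
    intro u w
    conv_lhs => rw [dotProduct_mulVec, ← hMsym, vecMul_transpose]
  -- key pointwise LMI consequence
  have key : ∀ y e : Fin n → ℝ,
      2 * (M.mulVec e ⬝ᵥ (A y).mulVec e)
        - ρ * (M.mulVec e ⬝ᵥ (B * Bᵀ).mulVec (M.mulVec e))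
        + 2 * lam * (e ⬝ᵥ M.mulVec e) ≤ 0 := by
    intro y e
    have h0 : 0 ≤ (M.mulVec e) ⬝ᵥ
        (((-(2 * lam)) • W - (W * (A y)ᵀ + A y * W - ρ • (B * Bᵀ))).mulVec (M.mulVec e)) := by
      simpa using (hLMI y).dotProduct_mulVec_nonneg (M.mulVec e)
    set v := M.mulVec e with hv
    have hWv : W.mulVec v = e := by
      rw [hv, mulVec_mulVec, hWM, one_mulVec]
    have e1 : v ⬝ᵥ ((-(2 * lam)) • W).mulVec v = -(2 * lam) * (e ⬝ᵥ v) := by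
      rw [smul_mulVec, dotProduct_smul, symW, hWv, smul_eq_mul]
    have e2 : v ⬝ᵥ (W * (A y)ᵀ).mulVec v = v ⬝ᵥ (A y).mulVec e := by
      rw [← mulVec_mulVec, symW, hWv, dotProduct_mulVec, vecMul_transpose, dotProduct_comm]
    have e3 : v ⬝ᵥ (A y * W).mulVec v = v ⬝ᵥ (A y).mulVec e := by
      rw [← mulVec_mulVec, hWv]
    have e4 : v ⬝ᵥ (ρ • (B * Bᵀ)).mulVec v = ρ * (v ⬝ᵥ (B * Bᵀ).mulVec v) := by
      rw [smul_mulVec, dotProduct_smul]; simp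
    have hve : e ⬝ᵥ M.mulVec e = e ⬝ᵥ v := rfl
    rw [sub_mulVec, sub_mulVec, add_mulVec, dotProduct_sub, dotProduct_sub, dotProduct_add,
      e1, e2, e3, e4] at h0
    linarith [h0]
  -- incremental (contraction) inequality via mean value
  have contr : ∀ a b : Fin n → ℝ,
      2 * (M.mulVec (a - b) ⬝ᵥ (f a - f b))
        - ρ * (M.mulVec (a - b) ⬝ᵥ (B * Bᵀ).mulVec (M.mulVec (a - b)))
        ≤ -(2 * lam) * ((a - b) ⬝ᵥ M.mulVec (a - b)) := by
    intro a b
    set e : Fin n → ℝ := a - b with he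
    set c : ℝ := -(ρ * (M.mulVec e ⬝ᵥ (B * Bᵀ).mulVec (M.mulVec e)))
        + 2 * lam * (e ⬝ᵥ M.mulVec e) with hc
    set ψ : ℝ → ℝ := fun s => 2 * (M.mulVec e ⬝ᵥ f (b + s • e)) + s * c with hψdef
    have hψ : ∀ s : ℝ, HasDerivAt ψ
        (2 * (M.mulVec e ⬝ᵥ (A (b + s • e)).mulVec e) + c) s := by
      intro s
      have hcurve : HasDerivAt (fun s : ℝ => b + s • e) e s := by
        simpa using ((hasDerivAt_id s).smul_const e).const_add b
      have h1 : HasDerivAt (fun s : ℝ => f (b + s • e)) ((A (b + s • e)).mulVec e) s := by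
        have := (hf (b + s • e)).comp_hasDerivAt s hcurve
        simpa [Matrix.toLin'_apply, Function.comp_def] using this
      have h2 := hasDerivAt_dotProduct' (hasDerivAt_const s (M.mulVec e)) h1
      have h3 : HasDerivAt (fun s : ℝ => 2 * (M.mulVec e ⬝ᵥ f (b + s • e)))
          (2 * (M.mulVec e ⬝ᵥ (A (b + s • e)).mulVec e)) s := by
        simpa using h2.const_mul 2
      exact (h3.add ((hasDerivAt_id s).mul_const c)).congr_deriv (by ring)
    have hanti : Antitone ψ := by
      apply antitone_of_deriv_nonpos
      · exact fun s => (hψ s).differentiableAt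
      · intro s
        rw [(hψ s).deriv]
        have := key (b + s • e) e
        linarith
    have h01 := hanti (by norm_num : (0:ℝ) ≤ 1)
    have hb1 : b + (1:ℝ) • e = a := by rw [he, one_smul]; abel
    have hb0 : b + (0:ℝ) • e = b := by rw [zero_smul, add_zero]
    rw [hψdef] at h01
    simp only [hb1, hb0, one_mul, zero_mul, add_zero] at h01
    have hsub : M.mulVec e ⬝ᵥ (f a - f b)
        = M.mulVec e ⬝ᵥ f a - M.mulVec e ⬝ᵥ f b := dotProduct_sub _ _ _
    rw [hc] at h01
    rw [hsub]
    linarith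
  -- error dynamics
  have hedot : ∀ t : ℝ, 0 ≤ t → HasDerivAt (fun t => x t - xstar t)
      (f (x t) - f (xstar t) + B.mulVec (K.mulVec (x t - xstar t))) t := by
    intro t ht
    have h := (hx t ht).sub (hxstar t ht)
    refine HasDerivAt.congr_deriv h ?_
    rw [mulVec_add]
    abel
  -- derivative of the Lyapunov function
  have hVd : ∀ t : ℝ, 0 ≤ t → HasDerivAt
      (fun t => (x t - xstar t) ⬝ᵥ M.mulVec (x t - xstar t))
      (2 * (M.mulVec (x t - xstar t) ⬝ᵥ
        (f (x t) - f (xstar t) + B.mulVec (K.mulVec (x t - xstar t))))) t := by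
    intro t ht
    have he := hedot t ht
    have hMv : HasDerivAt (fun t => M.mulVec (x t - xstar t))
        (M.mulVec (f (x t) - f (xstar t) + B.mulVec (K.mulVec (x t - xstar t)))) t := by
      have := ((Matrix.mulVecLin M).toContinuousLinearMap.hasFDerivAt).comp_hasDerivAt t he
      simpa [Function.comp_def] using this
    have h := hasDerivAt_dotProduct' he hMv
    convert h using 1
    set ed := f (x t) - f (xstar t) + B.mulVec (K.mulVec (x t - xstar t))
    rw [symM (x t - xstar t) ed, dotProduct_comm ed (M.mulVec (x t - xstar t))]
    ring
  -- the derivative bound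
  have hbound : ∀ t : ℝ, 0 ≤ t →
      2 * (M.mulVec (x t - xstar t) ⬝ᵥ
        (f (x t) - f (xstar t) + B.mulVec (K.mulVec (x t - xstar t))))
      ≤ -(2 * lam) * ((x t - xstar t) ⬝ᵥ M.mulVec (x t - xstar t)) := by
    intro t ht
    set e : Fin n → ℝ := x t - xstar t with he
    have hKe : B.mulVec (K.mulVec e) = (-(ρ / 2)) • ((B * Bᵀ).mulVec (M.mulVec e)) := by
      rw [hK, smul_mulVec, mulVec_smul, ← mulVec_mulVec, ← mulVec_mulVec]
    have hdotadd : M.mulVec e ⬝ᵥ (f (x t) - f (xstar t) + B.mulVec (K.mulVec e))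
        = M.mulVec e ⬝ᵥ (f (x t) - f (xstar t))
          + (-(ρ / 2)) * (M.mulVec e ⬝ᵥ (B * Bᵀ).mulVec (M.mulVec e)) := by
      rw [dotProduct_add, hKe, dotProduct_smul]
      simp
    rw [hdotadd]
    have := contr (x t) (xstar t)
    rw [← he] at this
    linarith
  -- Grönwall via monotonicity of exp(2λt)·V(t)
  set V : ℝ → ℝ := fun t => (x t - xstar t) ⬝ᵥ M.mulVec (x t - xstar t) with hVdef
  set g : ℝ → ℝ := fun t => Real.exp (2 * lam * t) * V t with hgdef
  have hg : ∀ t : ℝ, 0 ≤ t → HasDerivAt g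
      (Real.exp (2 * lam * t) * (2 * (M.mulVec (x t - xstar t) ⬝ᵥ
        (f (x t) - f (xstar t) + B.mulVec (K.mulVec (x t - xstar t)))))
       + (2 * lam * Real.exp (2 * lam * t)) * V t) t := by
    intro t ht
    have hexp : HasDerivAt (fun t : ℝ => Real.exp (2 * lam * t))
        (2 * lam * Real.exp (2 * lam * t)) t := by
      have h0 : HasDerivAt (fun s : ℝ => 2 * lam * s) (2 * lam) t := by
        simpa using (hasDerivAt_id t).const_mul (2 * lam)
      have h := h0.exp
      convert h using 1
      ring
    have := hexp.mul (hVd t ht)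
    exact this.congr_deriv (by ring)
  have hganti : AntitoneOn g (Set.Ici (0:ℝ)) := by
    apply antitoneOn_of_deriv_nonpos (convex_Ici 0)
    · intro t ht
      exact ((Real.continuous_exp.comp (continuous_const.mul continuous_id)).continuousAt.mul
        ((hVd t ht).continuousAt)).continuousWithinAt
    · intro t ht
      rw [interior_Ici] at ht
      exact ((hg t (le_of_lt ht)).differentiableAt).differentiableWithinAt
    · intro t ht
      rw [interior_Ici] at ht
      rw [(hg t (le_of_lt ht)).deriv]
      have hb := hbound t (le_of_lt ht)
      have hE : (0:ℝ) < Real.exp (2 * lam * t) := Real.exp_pos _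
      have hterm : Real.exp (2 * lam * t) * (2 * (M.mulVec (x t - xstar t) ⬝ᵥ
          (f (x t) - f (xstar t) + B.mulVec (K.mulVec (x t - xstar t)))))
          ≤ Real.exp (2 * lam * t) * (-(2 * lam) * V t) :=
        mul_le_mul_of_nonneg_left hb hE.le
      nlinarith
  intro t ht
  have hgle : g t ≤ g 0 := hganti (Set.self_mem_Ici) ht ht
  rw [hgdef] at hgle
  simp only [mul_zero, Real.exp_zero, one_mul] at hgle
  have hE : (0:ℝ) < Real.exp (2 * lam * t) := Real.exp_pos _
  have hfin : V t ≤ Real.exp (-(2 * lam) * t) * V 0 := by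
    rw [show -(2 * lam) * t = -(2 * lam * t) by ring, Real.exp_neg, inv_mul_eq_div,
      le_div_iff₀ hE]
    nlinarith
  exact hfin
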